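/- Let S be a compact positive self-adjoint operator on a Hilbert space with 0 ≤ S ≤ Id, let 0 < p ≤ 1 and ε ∈ (0,1/2), and suppose S − S² belongs to the Schatten p-class. Then the number of eigenvalues of S in (ε, 1−ε), counted with multiplicity, satisfies #M_ε(S) ≤ ‖S − S²‖_p^p / (ε − ε²)^p. -/

import Mathlib

open MeasureTheory Set Filter
open scoped ENNReal NNReal Classical

noncomputable section

/-- The eigenvalue/singular-value sequence of an operator, listed with multiplicity:
`eigSeq S n = inf {‖S - S₀‖ : rank S₀ < n+1}` (so `eigSeq S (k-1)` is the paper's `λ_k`). -/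
def eigSeq {H : Type*} [NormedAddCommGroup H] [NormedSpace ℂ H] (S : H →L[ℂ] H) (n : ℕ) : ℝ :=
  sInf {r : ℝ | ∃ S₀ : H →L[ℂ] H,
    Module.rank ℂ (LinearMap.range (S₀ : H →ₗ[ℂ] H)) < ((n + 1 : ℕ) : Cardinal) ∧ r = ‖S - S₀‖}

set_option maxHeartbeats 2000000

section aux
variable {H : Type*} [NormedAddCommGroup H] [NormedSpace ℂ H]

lemma eigSet_nonempty (S : H →L[ℂ] H) (n : ℕ) :
    {r : ℝ | ∃ S₀ : H →L[ℂ] H,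
      Module.rank ℂ (LinearMap.range (S₀ : H →ₗ[ℂ] H)) < ((n + 1 : ℕ) : Cardinal) ∧
        r = ‖S - S₀‖}.Nonempty := by
  refine ⟨‖S - 0‖, 0, ?_, rfl⟩
  have h0 : Module.rank ℂ (LinearMap.range ((0 : H →L[ℂ] H) : H →ₗ[ℂ] H)) = 0 := by
    rw [ContinuousLinearMap.coe_zero, LinearMap.range_zero]
    exact rank_bot ℂ H
  rw [h0]
  exact Nat.cast_pos.mpr (Nat.succ_pos n)

lemma eigSet_bddBelow (S : H →L[ℂ] H) (n : ℕ) :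
    BddBelow {r : ℝ | ∃ S₀ : H →L[ℂ] H,
      Module.rank ℂ (LinearMap.range (S₀ : H →ₗ[ℂ] H)) < ((n + 1 : ℕ) : Cardinal) ∧
        r = ‖S - S₀‖} :=
  ⟨0, by rintro r ⟨S₀, -, rfl⟩; positivity⟩

lemma eigSeq_nonneg (S : H →L[ℂ] H) (n : ℕ) : 0 ≤ eigSeq S n :=
  le_csInf (eigSet_nonempty S n) (by rintro r ⟨S₀, -, rfl⟩; positivity)

lemma eigSeq_le (S : H →L[ℂ] H) (n : ℕ) (S₀ : H →L[ℂ] H)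
    (h : Module.rank ℂ (LinearMap.range (S₀ : H →ₗ[ℂ] H)) < ((n + 1 : ℕ) : Cardinal)) :
    eigSeq S n ≤ ‖S - S₀‖ :=
  csInf_le (eigSet_bddBelow S n) ⟨S₀, h, rfl⟩

lemma le_eigSeq (S : H →L[ℂ] H) (n : ℕ) {c : ℝ}
    (h : ∀ S₀ : H →L[ℂ] H,
      Module.rank ℂ (LinearMap.range (S₀ : H →ₗ[ℂ] H)) < ((n + 1 : ℕ) : Cardinal) →
        c ≤ ‖S - S₀‖) : c ≤ eigSeq S n :=
  le_csInf (eigSet_nonempty S n) (by rintro r ⟨S₀, hS₀, rfl⟩; exact h S₀ hS₀)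

lemma exists_of_eigSeq_lt {S : H →L[ℂ] H} {n : ℕ} {v : ℝ} (h : eigSeq S n < v) :
    ∃ S₀ : H →L[ℂ] H,
      Module.rank ℂ (LinearMap.range (S₀ : H →ₗ[ℂ] H)) < ((n + 1 : ℕ) : Cardinal) ∧
        ‖S - S₀‖ < v := by
  obtain ⟨r, ⟨S₀, hS₀, rfl⟩, hr⟩ := exists_lt_of_csInf_lt (eigSet_nonempty S n) h
  exact ⟨S₀, hS₀, hr⟩

lemma eigSeq_antitone (S : H →L[ℂ] H) : Antitone (eigSeq S) := by
  intro m n hmn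
  refine le_eigSeq S m fun S₀ hS₀ => eigSeq_le S n S₀ (lt_of_lt_of_le hS₀ ?_)
  exact Nat.cast_le.mpr (by omega)

/-- ramp function: 0 up to `a`, 1 from `b` on. -/
def ramp (a b t : ℝ) : ℝ := max 0 (min 1 ((t - a) / (b - a)))

lemma ramp_continuous (a b : ℝ) : Continuous (ramp a b) := by
  unfold ramp; fun_prop

lemma ramp_nonneg (a b t : ℝ) : 0 ≤ ramp a b t := le_max_left _ _

lemma ramp_le_one (a b t : ℝ) : ramp a b t ≤ 1 := by
  unfold ramp
  exact max_le zero_le_one (min_le_left _ _)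

lemma ramp_of_le {a b t : ℝ} (hab : a < b) (h : t ≤ a) : ramp a b t = 0 := by
  unfold ramp
  rw [max_eq_left]
  exact le_trans (min_le_right _ _) (div_nonpos_of_nonpos_of_nonneg (by linarith) (by linarith))

lemma ramp_of_ge {a b t : ℝ} (hab : a < b) (h : b ≤ t) : ramp a b t = 1 := by
  unfold ramp
  rw [min_eq_left, max_eq_right zero_le_one]
  rw [le_div_iff₀ (by linarith)]
  linarith

lemma ramp_pos_imp {a b t : ℝ} (hab : a < b) (h : ramp a b t ≠ 0) : a < t := by
  by_contra hc
  exact h (ramp_of_le hab (not_lt.mp hc))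

/-- Kernel argument: a finite rank operator vanishes somewhere on a subspace of larger rank. -/
lemma exists_mem_ker {W : Submodule ℂ H} {F : H →L[ℂ] H}
    (h : Module.rank ℂ (LinearMap.range (F : H →ₗ[ℂ] H)) < Module.rank ℂ W) :
    ∃ x ∈ W, x ≠ 0 ∧ F x = 0 := by
  by_contra hc
  push_neg at hc
  have hinj : Function.Injective
      (LinearMap.codRestrict (LinearMap.range (F : H →ₗ[ℂ] H))
        (((F : H →ₗ[ℂ] H)).comp W.subtype) (fun x => LinearMap.mem_range_self _ _)) := by
    intro x y hxy
    have hx : F (x - y : H) = 0 := by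
      have := congrArg Subtype.val hxy
      simp only [LinearMap.codRestrict_apply, LinearMap.comp_apply, Submodule.subtype_apply] at this
      simp only [map_sub, Submodule.coe_sub]
      simpa [sub_eq_zero] using this
    by_contra hne
    have hmem : ((x : H) - y) ∈ W := W.sub_mem x.2 y.2
    have hne' : (x : H) - y ≠ 0 := fun h0 => hne (by
      apply Subtype.ext
      exact sub_eq_zero.mp h0)
    exact hc _ hmem hne' hx
  exact absurd (LinearMap.rank_le_of_injective _ hinj) (not_le.mpr h)

end aux

section cfcAux
variable {H : Type*} [NormedAddCommGroup H] [InnerProductSpace ℂ H] [CompleteSpace H]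
open ContinuousLinearMap
local notation "⟪" x ", " y "⟫" => @inner ℂ _ _ x y

lemma quad_lower (S : H →L[ℂ] H) (hS : IsSelfAdjoint S) (ψ φ : ℝ → ℝ)
    (hψ : Continuous ψ) (hφ : Continuous φ) (h : ∀ t, 0 ≤ ψ t * (φ t * ψ t))
    {x : H} (hx : x ∈ LinearMap.range ((cfc ψ S : H →L[ℂ] H) : H →ₗ[ℂ] H)) :
    0 ≤ RCLike.re ⟪(cfc φ S) x, x⟫ := by
  obtain ⟨y, hy⟩ := hx
  obtain ⟨A, hA⟩ : ∃ A, cfc ψ S = A := ⟨_, rfl⟩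
  obtain ⟨X, hX⟩ : ∃ X, cfc φ S = X := ⟨_, rfl⟩
  have hy' : A y = x := by rw [← hA]; exact hy
  have hsa : IsSelfAdjoint A := hA ▸ cfc_predicate ψ S
  have hmul : cfc (fun t => ψ t * (φ t * ψ t)) S = A * (X * A) := by
    rw [cfc_mul ψ (fun t => φ t * ψ t) S hψ.continuousOn (hφ.mul hψ).continuousOn,
        cfc_mul φ ψ S hφ.continuousOn hψ.continuousOn, hA, hX]
  have hpos : (A * (X * A)).IsPositive := by
    rw [← hmul]
    exact (nonneg_iff_isPositive _).mp (cfc_nonneg fun t _ => h t)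
  have hkey := hpos.inner_nonneg_left y
  have happ : (A * (X * A)) y = A (X (A y)) := by
    simp [ContinuousLinearMap.mul_apply]
  have hadj : ∀ z w : H, ⟪A z, w⟫ = ⟪z, A w⟫ := fun z w => hsa.isSymmetric z w
  rw [hX]
  have heq : ⟪(A * (X * A)) y, y⟫ = ⟪X x, x⟫ := by
    rw [happ, hadj (X (A y)) y, hy']
  rw [heq] at hkey
  exact (RCLike.nonneg_iff.mp hkey).1

lemma form_bound (S : H →L[ℂ] H) (hS : IsSelfAdjoint S) (ψ : ℝ → ℝ) (hψ : Continuous ψ)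
    (T : H →L[ℂ] H) (φ : ℝ → ℝ) (hφ : Continuous φ) (hT : cfc φ S = T) (u : ℝ)
    (h : ∀ t, 0 ≤ ψ t * ((φ t - u) * ψ t))
    {x : H} (hx : x ∈ LinearMap.range ((cfc ψ S : H →L[ℂ] H) : H →ₗ[ℂ] H)) :
    u * ‖x‖ ^ 2 ≤ RCLike.re ⟪T x, x⟫ := by
  have hsub : cfc (fun t => φ t - u) S = T - algebraMap ℝ (H →L[ℂ] H) u := by
    rw [cfc_sub _ _ S hφ.continuousOn continuousOn_const, hT, cfc_const u S hS]
  have := quad_lower S hS ψ (fun t => φ t - u) hψ (hφ.sub continuous_const) h hx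
  rw [hsub] at this
  have happ : (T - algebraMap ℝ (H →L[ℂ] H) u) x = T x - u • x := by
    rw [sub_apply, Algebra.algebraMap_eq_smul_one, smul_apply, ContinuousLinearMap.one_apply]
  rw [happ, inner_sub_left] at this
  have hre : RCLike.re ⟪u • x, x⟫ = u * ‖x‖ ^ 2 := by
    rw [RCLike.real_smul_eq_coe_smul (K := ℂ), inner_smul_left, RCLike.conj_ofReal,
      RCLike.re_ofReal_mul, inner_self_eq_norm_sq]
  rw [map_sub, hre] at this
  linarith

lemma norm_sub_ge (T F : H →L[ℂ] H) {x : H} (hx : x ≠ 0) (hFx : F x = 0) {u : ℝ}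
    (hu : u * ‖x‖ ^ 2 ≤ RCLike.re ⟪T x, x⟫) : u ≤ ‖T - F‖ := by
  have h0 : (0:ℝ) < ‖x‖ ^ 2 := pow_pos (norm_pos_iff.mpr hx) 2
  have h1 : RCLike.re ⟪(T - F) x, x⟫ ≤ ‖T - F‖ * ‖x‖ ^ 2 := by
    calc RCLike.re ⟪(T - F) x, x⟫ ≤ ‖⟪(T - F) x, x⟫‖ := RCLike.re_le_norm _
    _ ≤ ‖(T - F) x‖ * ‖x‖ := norm_inner_le_norm _ _
    _ ≤ (‖T - F‖ * ‖x‖) * ‖x‖ := by gcongr; exact (T - F).le_opNorm x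
    _ = ‖T - F‖ * ‖x‖ ^ 2 := by ring
  have h2 : (T - F) x = T x := by simp [hFx]
  rw [h2] at h1
  have := hu.trans h1
  exact le_of_mul_le_mul_right (by linarith [mul_comm u (‖x‖^2), mul_comm ‖T - F‖ (‖x‖^2)]) h0

end cfcAux

section key
variable {H : Type*} [NormedAddCommGroup H] [InnerProductSpace ℂ H] [CompleteSpace H]
open ContinuousLinearMap
local notation "⟪" x ", " y "⟫" => @inner ℂ _ _ x y

lemma key_lemma (S : H →L[ℂ] H) (hpos : S.IsPositive)
    {ε : ℝ} (hε0 : 0 < ε) (hε2 : ε < 1/2) {α β : ℕ} (hαβ : α ≤ β)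
    (hβ1 : ε < eigSeq S β) (hβ2 : eigSeq S β < 1 - ε) (hα : eigSeq S α < 1 - ε)
    {m : ℕ} (hm : m ≤ β - α) :
    ε - ε ^ 2 ≤ eigSeq (S - S * S) m := by
  have hS : IsSelfAdjoint S := hpos.isSelfAdjoint
  set lb := eigSeq S β with hlb
  set la := eigSeq S α with hla
  have hba : lb ≤ la := eigSeq_antitone S hαβ
  set v := (ε + lb) / 2 with hv
  set u := (la + (1 - ε)) / 2 with hu
  have hεv : ε < v := by rw [hv]; linarith
  have hvlb : v < lb := by rw [hv]; linarith
  have hvu : v < u := by rw [hv, hu]; linarith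
  have hau : la < u := by rw [hu]; linarith
  have hu1 : u < 1 - ε := by rw [hu]; linarith
  have hv1 : v < 1 - ε := hvu.trans hu1
  set h₁ := ramp ε v with hh₁
  set h₂ := ramp u (1 - ε) with hh₂
  set g := fun t => h₁ t - h₂ t with hg
  have hc1 : Continuous h₁ := ramp_continuous _ _
  have hc2 : Continuous h₂ := ramp_continuous _ _
  have hcg : Continuous g := hc1.sub hc2
  have hspec : ∀ t ∈ spectrum ℝ S, 0 ≤ t := fun t ht =>
    spectrum_nonneg_of_nonneg ((nonneg_iff_isPositive S).mpr hpos) ht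
  have hg_supp : ∀ t, g t ≠ 0 → ε < t ∧ t < 1 - ε := by
    intro t ht
    constructor
    · by_contra hc
      push_neg at hc
      have e1 : h₁ t = 0 := ramp_of_le hεv hc
      have e2 : h₂ t = 0 := ramp_of_le hu1 (hc.trans (by linarith))
      exact ht (by rw [hg]; simp [e1, e2])
    · by_contra hc
      push_neg at hc
      have e1 : h₁ t = 1 := ramp_of_ge hεv (by linarith)
      have e2 : h₂ t = 1 := ramp_of_ge hu1 hc
      exact ht (by rw [hg]; simp [e1, e2])
  -- Step A : rank of cfc h₂ S is at most α
  have hrank2 : Module.rank ℂ (LinearMap.range ((cfc h₂ S : H →L[ℂ] H) : H →ₗ[ℂ] H))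
      < ((α + 1 : ℕ) : Cardinal) := by
    by_contra hcon
    push_neg at hcon
    obtain ⟨F, hFrank, hFnorm⟩ := exists_of_eigSeq_lt (show eigSeq S α < u from hau)
    obtain ⟨x, hxW, hx0, hFx⟩ := exists_mem_ker (lt_of_lt_of_le hFrank hcon)
    have hpt : ∀ t, 0 ≤ h₂ t * (((fun t => t) t - u) * h₂ t) := by
      intro t
      rcases le_or_gt t u with h | h
      · rw [hh₂, ramp_of_le hu1 h]; ring_nf; exact le_refl 0
      · have := ramp_nonneg u (1 - ε) t
        have h' : 0 ≤ t - u := by linarith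
        have : (0:ℝ) ≤ (t - u) * h₂ t := mul_nonneg h' this
        exact mul_nonneg (ramp_nonneg u (1 - ε) t) this
    have hform : u * ‖x‖ ^ 2 ≤ RCLike.re ⟪S x, x⟫ :=
      form_bound S hS h₂ hc2 S (fun t => t) continuous_id (cfc_id' ℝ S hS) u hpt hxW
    exact absurd (norm_sub_ge S F hx0 hFx hform) (not_le.mpr hFnorm)
  -- Step B : rank of cfc h₁ S is at least β + 1
  have hrank1 : ((β + 1 : ℕ) : Cardinal)
      ≤ Module.rank ℂ (LinearMap.range ((cfc h₁ S : H →L[ℂ] H) : H →ₗ[ℂ] H)) := by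
    by_contra hcon
    push_neg at hcon
    have hFrank : Module.rank ℂ
        (LinearMap.range ((S * cfc h₁ S : H →L[ℂ] H) : H →ₗ[ℂ] H)) < ((β + 1 : ℕ) : Cardinal) := by
      refine lt_of_le_of_lt ?_ hcon
      rw [ContinuousLinearMap.mul_def, ContinuousLinearMap.toLinearMap_comp]
      exact LinearMap.rank_comp_le_right _ _
    have hTeq : S - S * cfc h₁ S = cfc (fun t => t - t * h₁ t) S := by
      rw [cfc_sub (fun t => t) (fun t => t * h₁ t) S continuous_id.continuousOn
          (continuous_id.mul hc1).continuousOn,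
        cfc_mul (fun t => t) h₁ S continuous_id.continuousOn hc1.continuousOn,
        cfc_id' ℝ S hS]
    have hnorm : ‖S - S * cfc h₁ S‖ ≤ v := by
      rw [hTeq]
      refine norm_cfc_le (by linarith) fun t ht => ?_
      have ht0 : 0 ≤ t := hspec t ht
      rcases le_or_gt t v with h | h
      · have b1 : h₁ t ≤ 1 := ramp_le_one _ _ _
        have b0 : 0 ≤ h₁ t := ramp_nonneg _ _ _
        rw [Real.norm_eq_abs, abs_of_nonneg (by nlinarith)]
        nlinarith
      · rw [hh₁, ramp_of_ge hεv h.le]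
        simp only [mul_one, sub_self, norm_zero]
        linarith
    have : eigSeq S β ≤ v := (eigSeq_le S β _ hFrank).trans hnorm
    rw [← hlb] at this
    linarith
  -- Step C : rank of cfc g S is at least m + 1
  have hrankg : ((m + 1 : ℕ) : Cardinal)
      ≤ Module.rank ℂ (LinearMap.range ((cfc g S : H →L[ℂ] H) : H →ₗ[ℂ] H)) := by
    have hdecomp : cfc h₁ S = cfc g S + cfc h₂ S := by
      have : h₁ = fun t => g t + h₂ t := by funext t; rw [hg]; ring
      rw [this]
      exact cfc_add S g h₂ hcg.continuousOn hc2.continuousOn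
    have hsum : Module.rank ℂ (LinearMap.range ((cfc h₁ S : H →L[ℂ] H) : H →ₗ[ℂ] H))
        ≤ Module.rank ℂ (LinearMap.range ((cfc g S : H →L[ℂ] H) : H →ₗ[ℂ] H))
          + Module.rank ℂ (LinearMap.range ((cfc h₂ S : H →L[ℂ] H) : H →ₗ[ℂ] H)) := by
      rw [hdecomp]
      rw [ContinuousLinearMap.coe_add]
      exact LinearMap.rank_add_le _ _
    set rg := Module.rank ℂ (LinearMap.range ((cfc g S : H →L[ℂ] H) : H →ₗ[ℂ] H)) with hrg
    rcases le_or_gt Cardinal.aleph0 rg with hinf | hfin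
    · exact le_trans (Cardinal.nat_lt_aleph0 _).le hinf
    · obtain ⟨kg, hkg⟩ := Cardinal.lt_aleph0.mp hfin
      obtain ⟨k2, hk2⟩ := Cardinal.lt_aleph0.mp (hrank2.trans (Cardinal.nat_lt_aleph0 _))
      have hk2' : k2 ≤ α := by
        have := hrank2
        rw [hk2] at this
        exact_mod_cast Nat.lt_succ_iff.mp (by exact_mod_cast this)
      have hchain : ((β + 1 : ℕ) : Cardinal) ≤ ((kg + k2 : ℕ) : Cardinal) := by
        refine (hrank1.trans hsum).trans ?_
        rw [hkg, hk2, Nat.cast_add]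
      have hchain' : β + 1 ≤ kg + k2 := by exact_mod_cast hchain
      have hgoal : m + 1 ≤ kg := by omega
      rw [hkg]
      exact Nat.cast_le.mpr hgoal
  -- Final step
  refine le_eigSeq (S - S * S) m fun F hF => ?_
  obtain ⟨x, hxW, hx0, hFx⟩ := exists_mem_ker (lt_of_lt_of_le hF hrankg)
  have hpt : ∀ t, 0 ≤ g t * (((fun t => t - t * t) t - (ε - ε ^ 2)) * g t) := by
    intro t
    rcases eq_or_ne (g t) 0 with h | h
    · rw [h]; ring_nf; exact le_refl 0
    · obtain ⟨ht1, ht2⟩ := hg_supp t h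
      have hfac : 0 ≤ (t - t * t) - (ε - ε ^ 2) := by nlinarith [(t - ε) * ((1 - ε) - t)]
      have : g t * (((t - t * t) - (ε - ε ^ 2)) * g t)
          = ((t - t * t) - (ε - ε ^ 2)) * (g t * g t) := by ring
      rw [this]
      exact mul_nonneg hfac (mul_self_nonneg _)
  have hTeq : cfc (fun t : ℝ => t - t * t) S = S - S * S := by
    rw [cfc_sub (fun t : ℝ => t) (fun t : ℝ => t * t) S continuous_id.continuousOn
        (continuous_id.mul continuous_id).continuousOn,
      cfc_mul (fun t : ℝ => t) (fun t : ℝ => t) S continuous_id.continuousOn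
        continuous_id.continuousOn,
      cfc_id' ℝ S hS]
  have hform : (ε - ε ^ 2) * ‖x‖ ^ 2 ≤ RCLike.re ⟪(S - S * S) x, x⟫ :=
    form_bound S hS g hcg (S - S * S) (fun t => t - t * t)
      (continuous_id.sub (continuous_id.mul continuous_id)) hTeq (ε - ε ^ 2) hpt hxW
  exact norm_sub_ge (S - S * S) F hx0 hFx hform

end key

/-- **Eq. (5.1).** The number of eigenvalues of `S` in `(ε, 1-ε)` is bounded by
`‖S - S²‖_p^p / (ε - ε²)^p`, where `‖T‖_p^p = Σ_n λ_n(T)^p` is the Schatten `p`-quasi-norm. -/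
theorem stmt_14 {H : Type*} [NormedAddCommGroup H] [InnerProductSpace ℂ H] [CompleteSpace H]
    (S : H →L[ℂ] H) (hcomp : IsCompactOperator S)
    (hpos : S.IsPositive) (hle : (1 - S).IsPositive)
    (p : ℝ) (hp0 : 0 < p) (hp1 : p ≤ 1) (ε : ℝ) (hε : ε ∈ Set.Ioo (0 : ℝ) (1/2))
    (hSch : Summable fun n => eigSeq (S - S * S) n ^ p) :
    {n : ℕ | eigSeq S n ∈ Set.Ioo ε (1 - ε)}.Finite ∧
    ({n : ℕ | eigSeq S n ∈ Set.Ioo ε (1 - ε)}.ncard : ℝ) ≤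
      (∑' n, eigSeq (S - S * S) n ^ p) / (ε - ε ^ 2) ^ p := by
  obtain ⟨hε0, hε2⟩ := hε
  have hcpos : (0:ℝ) < ε - ε ^ 2 := by nlinarith
  have hcp : (0:ℝ) < (ε - ε ^ 2) ^ p := Real.rpow_pos_of_pos hcpos p
  have hterm : ∀ m : ℕ, 0 ≤ eigSeq (S - S * S) m ^ p :=
    fun m => Real.rpow_nonneg (eigSeq_nonneg _ _) p
  have htsum0 : 0 ≤ ∑' n, eigSeq (S - S * S) n ^ p := tsum_nonneg hterm
  set M := {n : ℕ | eigSeq S n ∈ Set.Ioo ε (1 - ε)} with hM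
  by_cases hne : M.Nonempty
  · set α := sInf M with hα
    have hαM : α ∈ M := Nat.sInf_mem hne
    have hfin : M.Finite := by
      by_contra hinf
      have hinf' : M.Infinite := hinf
      have hall : ∀ m : ℕ, ε - ε ^ 2 ≤ eigSeq (S - S * S) m := by
        intro m
        obtain ⟨β, hβM, hβgt⟩ := hinf'.exists_gt (α + m)
        exact key_lemma S hpos hε0 hε2 (by omega) hβM.1 hβM.2 hαM.2 (by omega)
      have htend := hSch.tendsto_atTop_zero
      have hev : ∀ᶠ n in Filter.atTop,
          eigSeq (S - S * S) n ^ p < (ε - ε ^ 2) ^ p :=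
        htend.eventually_lt_const hcp
      obtain ⟨n, hn⟩ := hev.exists
      have : (ε - ε ^ 2) ^ p ≤ eigSeq (S - S * S) n ^ p :=
        Real.rpow_le_rpow hcpos.le (hall n) hp0.le
      linarith
    refine ⟨hfin, ?_⟩
    -- β : max of M
    have hne' : hfin.toFinset.Nonempty := by
      rwa [Set.Finite.toFinset_nonempty]
    set β := hfin.toFinset.max' hne' with hβ
    have hβM : β ∈ M := by
      have := hfin.toFinset.max'_mem hne'
      rwa [Set.Finite.mem_toFinset] at this
    have hαβ : α ≤ β := Nat.sInf_le hβM
    have hMeq : M = Set.Icc α β := by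
      ext n
      constructor
      · intro hn
        exact ⟨Nat.sInf_le hn, hfin.toFinset.le_max' n (hfin.mem_toFinset.mpr hn)⟩
      · rintro ⟨h1, h2⟩
        constructor
        · exact lt_of_lt_of_le hβM.1 (eigSeq_antitone S h2)
        · exact lt_of_le_of_lt (eigSeq_antitone S h1) hαM.2
    have hncard : M.ncard = β - α + 1 := by
      rw [hMeq, ← Finset.coe_Icc, Set.ncard_coe_finset, Nat.card_Icc]
      omega
    set N := β - α + 1 with hN
    have hkey : ∀ m ∈ Finset.range N, (ε - ε ^ 2) ^ p ≤ eigSeq (S - S * S) m ^ p := by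
      intro m hm
      rw [Finset.mem_range] at hm
      exact Real.rpow_le_rpow hcpos.le
        (key_lemma S hpos hε0 hε2 hαβ hβM.1 hβM.2 hαM.2 (by omega)) hp0.le
    have h1 : (N : ℝ) * (ε - ε ^ 2) ^ p ≤ ∑ m ∈ Finset.range N, eigSeq (S - S * S) m ^ p := by
      calc (N : ℝ) * (ε - ε ^ 2) ^ p = ∑ _m ∈ Finset.range N, (ε - ε ^ 2) ^ p := by
            rw [Finset.sum_const, Finset.card_range, nsmul_eq_mul]
        _ ≤ ∑ m ∈ Finset.range N, eigSeq (S - S * S) m ^ p := Finset.sum_le_sum hkey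
    have h2 : ∑ m ∈ Finset.range N, eigSeq (S - S * S) m ^ p ≤ ∑' n, eigSeq (S - S * S) n ^ p :=
      Summable.sum_le_tsum (Finset.range N) (fun i _ => hterm i) hSch
    rw [hncard, le_div_iff₀ hcp]
    exact h1.trans h2
  · have hMemp : M = ∅ := Set.not_nonempty_iff_eq_empty.mp hne
    refine ⟨hMemp ▸ Set.finite_empty, ?_⟩
    rw [hMemp]
    simp only [Set.ncard_empty, Nat.cast_zero]
    exact div_nonneg htsum0 hcp.le
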